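/- For all integers p, q, r: if p is even then x_{p,q,r} ▷ b = x_{p+1,−q,−r}, and if p is odd then x_{p,q,r} ▷ b = x_{p−1,−q,−r}. -/

import Mathlib

section GroupLemmas
variable {G : Type*} [Group G]

private lemma sq_conj (u v : G) (h : (v * u) * (v * u) = 1) : (u * v) * (u * v) = 1 := by
  calc (u * v) * (u * v) = u * ((v * u) * (v * u)) * u⁻¹ := by group
    _ = 1 := by rw [h]; group

private lemma conj_invol {u v : G} (hu : u⁻¹ = u) (h : (u * v) * (u * v) = 1) :
    u * v * u = v⁻¹ := by
  have h2 : (u * v)⁻¹ = u * v := inv_eq_of_mul_eq_one_right h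
  have h1 : u * v = v⁻¹ * u := by
    calc u * v = (u * v)⁻¹ := h2.symm
      _ = v⁻¹ * u⁻¹ := by group
      _ = v⁻¹ * u := by rw [hu]
  calc u * v * u = v⁻¹ * u * u := by rw [h1]
    _ = v⁻¹ * (u⁻¹ * u) := by rw [hu, mul_assoc]
    _ = v⁻¹ := by group

private lemma conj_inv_ver {u v : G} (hu : u⁻¹ = u) (h : u * v * u = v⁻¹) :
    u * v⁻¹ * u = v := by
  have : (u * v * u)⁻¹ = v := by rw [h, inv_inv]
  calc u * v⁻¹ * u = (u⁻¹ * v * u⁻¹)⁻¹ := by group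
    _ = (u * v * u)⁻¹ := by rw [hu]
    _ = v := this

/-- The key group computation. -/
private lemma key_perm (k : ℤ) (A B C D E F : G)
    (hA2 : A * A = 1) (hB2 : B * B = 1) (hE2 : E * E = 1) (hF2 : F * F = 1)
    (hAED : A * (E * D) = 1) (hFDB : F * (D * B) = 1)
    (hCKE : E * (A * ((B * A) ^ k * C)) = 1) :
    ∀ q r : ℤ, B * (D ^ r * C ^ q) = (D ^ (-r) * C ^ (-q)) * B := by
  have hAi : A⁻¹ = A := inv_eq_of_mul_eq_one_right hA2
  have hBi : B⁻¹ = B := inv_eq_of_mul_eq_one_right hB2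
  have hEi : E⁻¹ = E := inv_eq_of_mul_eq_one_right hE2
  have hFi : F⁻¹ = F := inv_eq_of_mul_eq_one_right hF2
  -- B inverts D
  have hDBF : D * B = F⁻¹ := eq_inv_of_mul_eq_one_right hFDB
  have hDBsq : (D * B) * (D * B) = 1 := by rw [hDBF, hFi, hF2]
  have hBDsq : (B * D) * (B * D) = 1 := sq_conj B D hDBsq
  have hBDB : B * D * B = D⁻¹ := conj_invol hBi hBDsq
  have hBDiB : B * D⁻¹ * B = D := conj_inv_ver hBi hBDB
  -- A inverts D
  have hED : E * D = A⁻¹ := eq_inv_of_mul_eq_one_right hAED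
  have hEval : E = A * D⁻¹ := by
    have : E = A⁻¹ * D⁻¹ := by rw [← hED]; group
    rw [this, hAi]
  have hADisq : (A * D⁻¹) * (A * D⁻¹) = 1 := by rw [← hEval]; exact hE2
  have hADiA : A * D⁻¹ * A = D := by
    have := conj_invol hAi hADisq
    simpa [inv_inv] using this
  have hADA : A * D * A = D⁻¹ := by
    have := conj_inv_ver hAi (v := D⁻¹) (by simpa [inv_inv] using hADiA)
    simpa [inv_inv] using this
  -- D commutes with B * A
  have hConjBA : (B * A) * D * (B * A)⁻¹ = D := by
    rw [mul_inv_rev, hAi, hBi]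
    calc B * A * D * (A * B) = B * (A * D * A) * B := by group
      _ = B * D⁻¹ * B := by rw [hADA]
      _ = D := hBDiB
  have hCommC : Commute D (B * A) := by
    exact (mul_inv_eq_iff_eq_mul.mp hConjBA).symm
  -- value of C
  have hEA : E * A = D := by rw [hEval]; exact hADiA
  have h1 : A * ((B * A) ^ k * C) = E⁻¹ := eq_inv_of_mul_eq_one_right hCKE
  have h2 : (B * A) ^ k * C = A⁻¹ * E⁻¹ := by rw [← h1]; group
  have h3 : A⁻¹ * E⁻¹ = D⁻¹ := by rw [← hEA]; group
  have h4 : (B * A) ^ k * C = D⁻¹ := h2.trans h3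
  have hCval : C = ((B * A) ^ k)⁻¹ * D⁻¹ := by rw [← h4]; group
  -- B inverts C
  have hConjBBA : B * (B * A) * B⁻¹ = (B * A)⁻¹ := by
    rw [mul_inv_rev, hAi, hBi]
    calc B * (B * A) * B = (B * B) * (A * B) := by group
      _ = A * B := by rw [hB2, one_mul]
  have hConjBAk : B * ((B * A) ^ k)⁻¹ * B⁻¹ = (B * A) ^ k := by
    calc B * ((B * A) ^ k)⁻¹ * B⁻¹ = (B * (B * A) ^ k * B⁻¹)⁻¹ := by group
      _ = ((B * (B * A) * B⁻¹) ^ k)⁻¹ := by rw [conj_zpow]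
      _ = (((B * A)⁻¹) ^ k)⁻¹ := by rw [hConjBBA]
      _ = (B * A) ^ k := by rw [inv_zpow, inv_inv]
  have hBCB : B * C * B = C⁻¹ := by
    calc B * C * B = (B * ((B * A) ^ k)⁻¹ * B⁻¹) * (B * D⁻¹ * B) := by
          rw [hCval]; group
      _ = (B * A) ^ k * D := by rw [hConjBAk, hBDiB]
      _ = D * (B * A) ^ k := ((hCommC.zpow_right k).eq).symm
      _ = C⁻¹ := by rw [hCval]; group
  -- zpow versions
  have hBDr : ∀ r : ℤ, B * D ^ r = D ^ (-r) * B := by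
    intro r
    have : B * D ^ r * B⁻¹ = D ^ (-r) := by
      calc B * D ^ r * B⁻¹ = (B * D * B⁻¹) ^ r := by rw [conj_zpow]
        _ = (D⁻¹) ^ r := by rw [hBi]; rw [hBDB]
        _ = D ^ (-r) := by rw [inv_zpow, zpow_neg]
    rw [← this]; group
  have hBCq : ∀ q : ℤ, B * C ^ q = C ^ (-q) * B := by
    intro q
    have : B * C ^ q * B⁻¹ = C ^ (-q) := by
      calc B * C ^ q * B⁻¹ = (B * C * B⁻¹) ^ q := by rw [conj_zpow]
        _ = (C⁻¹) ^ q := by rw [hBi]; rw [hBCB]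
        _ = C ^ (-q) := by rw [inv_zpow, zpow_neg]
    rw [← this]; group
  intro q r
  calc B * (D ^ r * C ^ q) = (B * D ^ r) * C ^ q := by rw [mul_assoc]
    _ = D ^ (-r) * (B * C ^ q) := by rw [hBDr, mul_assoc]
    _ = D ^ (-r) * (C ^ (-q) * B) := by rw [hBCq]
    _ = (D ^ (-r) * C ^ (-q)) * B := by rw [mul_assoc]

end GroupLemmas



/-- A quandle as in the paper: a set with operations `▷` and `▷⁻¹` satisfying
axioms A1, A2, A3. -/
class PaperQuandle (Q : Type*) where
  rhd : Q → Q → Q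
  rhdInv : Q → Q → Q
  fix : ∀ x : Q, rhd x x = x
  inv_rhd : ∀ x y : Q, rhdInv (rhd x y) y = x
  rhd_inv : ∀ x y : Q, rhd (rhdInv x y) y = x
  self_distrib : ∀ x y z : Q, rhd (rhd x y) z = rhd (rhd x z) (rhd y z)

infixl:65 " ▷ " => PaperQuandle.rhd
infixl:65 " ▷⁻¹ " => PaperQuandle.rhdInv

/-- The point symmetry at `u`, as a permutation of `Q`: `x ↦ x ▷ u`,
with inverse `x ↦ x ▷⁻¹ u`. -/
def ptSym {Q : Type*} [PaperQuandle Q] (u : Q) : Equiv.Perm Q where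
  toFun x := x ▷ u
  invFun x := x ▷⁻¹ u
  left_inv x := PaperQuandle.inv_rhd x u
  right_inv x := PaperQuandle.rhd_inv x u

/-- The element `x_{p,q,r} = a^{(ba)^t c^q d^r}` if `p = 2t`, and
`a^{(ba)^t b c^q d^r}` if `p = 2t+1`.  Here the word `ba` (apply `b`, then `a`)
is the permutation `ptSym a * ptSym b`. -/
def X {Q : Type*} [PaperQuandle Q] (a b c d : Q) (p q r : ℤ) : Q :=
  if Even p then
    (ptSym d ^ r) ((ptSym c ^ q) (((ptSym a * ptSym b) ^ (p / 2)) a))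
  else
    (ptSym d ^ r) ((ptSym c ^ q) ((((ptSym a * ptSym b) ^ ((p - 1) / 2)) a) ▷ b))

theorem stmt_14
    {Q : Type*} [PaperQuandle Q] (k : ℤ) (m n : ℕ) (a b c d e f : Q)
    (hk : 1 ≤ k) (hm : 0 < m) (hn : 0 < n)
    (rel_a : ∀ x : Q, x ▷ a ▷ a = x)
    (rel_b : ∀ x : Q, x ▷ b ▷ b = x)
    (rel_e : ∀ x : Q, x ▷ e ▷ e = x)
    (rel_f : ∀ x : Q, x ▷ f ▷ f = x)
    (rel_c : ∀ x : Q, (ptSym c ^ m) x = x)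
    (rel_d : ∀ x : Q, (ptSym d ^ n) x = x)
    (rel_dea : ∀ x : Q, x ▷ d ▷ e ▷ a = x)
    (rel_bdf : ∀ x : Q, x ▷ b ▷ d ▷ f = x)
    (rel_cke : ∀ x : Q, (((ptSym b * ptSym a) ^ k) (x ▷ c)) ▷ a ▷ e = x)
    (rel_fca : ∀ x : Q, (((ptSym b * ptSym a) ^ (k - 1)) (x ▷ f ▷ c)) ▷ a = x) :
    ∀ p q r : ℤ,
      (Even p → X a b c d p q r ▷ b = X a b c d (p + 1) (-q) (-r)) ∧
      (Odd p → X a b c d p q r ▷ b = X a b c d (p - 1) (-q) (-r)) := by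
    intro p q r
    have key : ∀ q r : ℤ, ptSym b * (ptSym d ^ r * ptSym c ^ q)
        = (ptSym d ^ (-r) * ptSym c ^ (-q)) * ptSym b :=
      key_perm k (ptSym a) (ptSym b) (ptSym c) (ptSym d) (ptSym e) (ptSym f)
        (Equiv.ext fun x => rel_a x) (Equiv.ext fun x => rel_b x)
        (Equiv.ext fun x => rel_e x) (Equiv.ext fun x => rel_f x)
        (Equiv.ext fun x => rel_dea x) (Equiv.ext fun x => rel_bdf x)
        (Equiv.ext fun x => rel_cke x)
    have keyPt : ∀ (q r : ℤ) (z : Q),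
        (ptSym d ^ r) ((ptSym c ^ q) z) ▷ b
          = (ptSym d ^ (-r)) ((ptSym c ^ (-q)) (z ▷ b)) := by
      intro q r z
      have h := DFunLike.congr_fun (key q r) z
      simpa [Equiv.Perm.mul_apply, show ∀ x, ptSym b x = x ▷ b from fun _ => rfl] using h
    constructor
    · intro hp
      have hp1 : ¬ Even (p + 1) := by
        rcases hp with ⟨t, ht⟩
        intro ⟨s, hs⟩; omega
      have hdiv : (p + 1 - 1) / 2 = p / 2 := by omega
      rw [X, X, if_pos hp, if_neg hp1, hdiv]
      exact keyPt q r _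
    · intro hp
      have hp0 : ¬ Even p := Int.not_even_iff_odd.mpr hp
      have hp1 : Even (p - 1) := by
        rcases hp with ⟨t, ht⟩
        exact ⟨t, by omega⟩
      rw [X, X, if_neg hp0, if_pos hp1]
      have h := keyPt q r ((((ptSym a * ptSym b) ^ ((p - 1) / 2)) a) ▷ b)
      rw [h, rel_b]
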